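/- Let H=(V,E,w) be a honeycomb and, for i=1,2,3 and s ∈ {+,−}, let B_i^s denote the set of semiinfinite edges of H of the form Ξ_i^s(·). Then the quantity w(B_i⁺) − w(B_i⁻) is the same for i=1,2,3, where w(B') denotes the sum of w(e) over e ∈ B'. -/

import Mathlib

open scoped BigOperators

attribute [local instance] Classical.propDecidable

noncomputable section

/-- Points of the plane. -/
abbrev Pt : Type := ℝ × ℝ

/-- Inner product on the plane. -/
def pdot (a b : Pt) : ℝ := a.1 * b.1 + a.2 * b.2

/-- The three generating vectors ξ₁ = (1,0), ξ₂ = (−1/2, √3/2), ξ₃ = (−1/2, −√3/2). -/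
noncomputable def xiv : Fin 3 → Pt
  | 0 => ((1 : ℝ), (0 : ℝ))
  | 1 => (-(1 / 2 : ℝ), Real.sqrt 3 / 2)
  | 2 => (-(1 / 2 : ℝ), -(Real.sqrt 3 / 2))

/-- Dual coordinates d_i(x) = −x·ξ_i. -/
noncomputable def dcoord (i : Fin 3) (x : Pt) : ℝ := -(pdot x (xiv i))

/-- Direction of the ray Ξ_i^s(·): ξ_i rotated by −90° for s = +(true), by +90° for
s = −(false), so that Ξ_i⁺(v)−v, ℝ₊ξ_i, Ξ_i⁻(v)−v follow anticlockwise. -/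
noncomputable def rayDir (i : Fin 3) (s : Bool) : Pt :=
  if s then ((xiv i).2, -(xiv i).1) else (-(xiv i).2, (xiv i).1)

/-- The ray Ξ_i^s(v). -/
def XiRay (i : Fin 3) (s : Bool) (v : Pt) : Set Pt :=
  {x | ∃ t : ℝ, 0 ≤ t ∧ x = v + t • rayDir i s}

/-- A finite line (nondegenerate segment). -/
def IsSegL (S : Set Pt) : Prop := ∃ a b : Pt, a ≠ b ∧ S = segment ℝ a b

/-- A semiinfinite line (ray) with end a. -/
def IsRayFrom (a : Pt) (S : Set Pt) : Prop :=
  ∃ d : Pt, d ≠ 0 ∧ S = {x | ∃ t : ℝ, 0 ≤ t ∧ x = a + t • d}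

/-- A semiinfinite line (ray). -/
def IsRayL (S : Set Pt) : Prop := ∃ a : Pt, IsRayFrom a S

/-- A fully infinite line. -/
def IsFullLineL (S : Set Pt) : Prop := ∃ a d : Pt, d ≠ 0 ∧ S = {x | ∃ t : ℝ, x = a + t • d}

/-- A line: a segment, a ray or a full line. -/
def IsLineL (S : Set Pt) : Prop := IsSegL S ∨ IsRayL S ∨ IsFullLineL S

/-- `S` is perpendicular to ξ_i, i.e. the dual coordinate d_i is constant on S. -/
def PerpTo (i : Fin 3) (S : Set Pt) : Prop := ∀ x ∈ S, ∀ y ∈ S, pdot (x - y) (xiv i) = 0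

/-- w_i^s(v): the total weight of the lines of the system whose intersection with
Ξ_i^s(v) contains v and is a line (not a point). -/
noncomputable def wis (L : Finset (Set Pt)) (w : Set Pt → ℤ) (i : Fin 3) (s : Bool)
    (v : Pt) : ℤ :=
  ∑ ℓ ∈ L.filter (fun ℓ => v ∈ ℓ ∧ IsLineL (ℓ ∩ XiRay i s v)), w ℓ

/-- A Ξ-system: a finite set of lines, each perpendicular to some ξ_i. -/
def IsXiSystem (L : Finset (Set Pt)) : Prop := ∀ ℓ ∈ L, IsLineL ℓ ∧ ∃ i : Fin 3, PerpTo i ℓ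

/-- A pre-honeycomb: a Ξ-system with all w_i^s(v) nonnegative satisfying the
divergency (zero-tension) condition at every point. -/
def IsPreHoneycomb (L : Finset (Set Pt)) (w : Set Pt → ℤ) : Prop :=
  IsXiSystem L ∧ (∀ (v : Pt) (i : Fin 3) (s : Bool), 0 ≤ wis L w i s v) ∧
  ∀ (v : Pt) (i j : Fin 3),
    wis L w i true v - wis L w i false v = wis L w j true v - wis L w j false v

/-- The divergency div_w(v). -/
noncomputable def divw (L : Finset (Set Pt)) (w : Set Pt → ℤ) (v : Pt) : ℤ :=
  wis L w 0 true v - wis L w 0 false v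

/-- An interior (non-end) point of a line. -/
def InteriorPt (S : Set Pt) (x : Pt) : Prop :=
  x ∈ S ∧ ∃ d : Pt, d ≠ 0 ∧ ∃ ε : ℝ, 0 < ε ∧ ∀ t : ℝ, |t| ≤ ε → x + t • d ∈ S

/-- `v` is an end of the line `S` (so `S` is incident to `v` as a graph edge). -/
def IsEnd (v : Pt) (S : Set Pt) : Prop := v ∈ S ∧ ¬ InteriorPt S v

/-- A honeycomb: a (non-standard) planar graph with a nonempty finite vertex set, whose
edges are positively weighted lines, each vertex incident with at least 3 edges, no
interior point of an edge lying on another edge, the ends of edges being vertices, and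
the weighted edge set forming a pre-honeycomb. -/
structure Honeycomb : Type where
  verts : Finset Pt
  edges : Finset (Set Pt)
  w : Set Pt → ℤ
  verts_nonempty : verts.Nonempty
  degree : ∀ v ∈ verts, 3 ≤ (edges.filter fun e => IsEnd v e).card
  no_cross : ∀ e ∈ edges, ∀ e' ∈ edges, e ≠ e' → ∀ x : Pt, InteriorPt e x → x ∉ e'
  w_pos : ∀ e ∈ edges, 0 < w e
  ends_mem : ∀ e ∈ edges, ∀ x : Pt, IsEnd x e → x ∈ verts
  edge_touch : ∀ e ∈ edges, ∃ v ∈ verts, v ∈ e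
  pre : IsPreHoneycomb edges w

/-- The set B_i^s of semiinfinite edges of H of the form Ξ_i^s(·). -/
noncomputable def Honeycomb.bdry (H : Honeycomb) (i : Fin 3) (s : Bool) : Finset (Set Pt) :=
  H.edges.filter fun e => ∃ v : Pt, e = XiRay i s v

noncomputable def rdir (i : Fin 3) : Pt := rayDir i true
lemma rdir_eq (i : Fin 3) : rdir i = ((xiv i).2, -(xiv i).1) := rfl
lemma rayDir_false_eq (i : Fin 3) : rayDir i false = -rdir i := by
  simp [rayDir, rdir, Prod.ext_iff]
lemma sqrt3_sq : Real.sqrt 3 ^ 2 = 3 := Real.sq_sqrt (by norm_num)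
lemma xiv_norm (i : Fin 3) : (xiv i).1 ^ 2 + (xiv i).2 ^ 2 = 1 := by
  fin_cases i <;> simp [xiv] <;> nlinarith [sqrt3_sq]
lemma rdir_ne_zero (i : Fin 3) : rdir i ≠ 0 := by
  intro h
  have h1 : (xiv i).2 = 0 := congrArg Prod.fst h
  have h2 : -(xiv i).1 = 0 := congrArg Prod.snd h
  have := xiv_norm i; nlinarith
lemma rayDir_ne_zero (i : Fin 3) (s : Bool) : rayDir i s ≠ 0 := by
  cases s
  · rw [rayDir_false_eq]; exact neg_ne_zero.mpr (rdir_ne_zero i)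
  · exact rdir_ne_zero i

-- onLine machinery
def onLine (a : Pt) (i : Fin 3) (I : Set ℝ) : Set Pt := (fun t : ℝ => a + t • rdir i) '' I

lemma smul_rdir_inj {i : Fin 3} {x y : ℝ} (h : x • rdir i = y • rdir i) : x = y := by
  by_contra hne
  apply rdir_ne_zero i
  have h3 : (x - y) • rdir i = 0 := by rw [sub_smul, h]; simp
  rcases smul_eq_zero.mp h3 with h4 | h4
  · exact absurd (sub_eq_zero.mp h4) hne
  · exact h4

lemma onLine_inj (a : Pt) (i : Fin 3) : Function.Injective (fun t : ℝ => a + t • rdir i) := by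
  intro x y h
  simp only [add_right_inj] at h
  exact smul_rdir_inj h

lemma mem_onLine {a : Pt} {i : Fin 3} {I : Set ℝ} {x : Pt} :
    x ∈ onLine a i I ↔ ∃ t ∈ I, x = a + t • rdir i := by
  simp [onLine, Set.mem_image, eq_comm]

lemma onLine_inj_sets {a : Pt} {i : Fin 3} {I J : Set ℝ} (h : onLine a i I = onLine a i J) :
    I = J := Set.image_injective.mpr (onLine_inj a i) h

lemma onLine_inter (a : Pt) (i : Fin 3) (I J : Set ℝ) :
    onLine a i I ∩ onLine a i J = onLine a i (I ∩ J) :=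
  (Set.image_inter (onLine_inj a i)).symm

lemma xiRay_true_eq (i : Fin 3) (v : Pt) : XiRay i true v = onLine v i (Set.Ici 0) := by
  ext x
  rw [mem_onLine]
  constructor
  · rintro ⟨t, ht, rfl⟩; exact ⟨t, ht, rfl⟩
  · rintro ⟨t, ht, rfl⟩; exact ⟨t, ht, rfl⟩

lemma xiRay_false_eq (i : Fin 3) (v : Pt) : XiRay i false v = onLine v i (Set.Iic 0) := by
  ext x
  rw [mem_onLine]
  constructor
  · rintro ⟨t, ht, rfl⟩
    exact ⟨-t, by simpa using ht, by rw [rayDir_false_eq]; module⟩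
  · rintro ⟨t, ht, rfl⟩
    refine ⟨-t, by simpa using ht, by rw [rayDir_false_eq]; module⟩

lemma onLine_shift (a : Pt) (i : Fin 3) (u : ℝ) (I : Set ℝ) :
    onLine (a + u • rdir i) i I = onLine a i ((fun t => u + t) '' I) := by
  unfold onLine
  have hfe : (fun t : ℝ => a + u • rdir i + t • rdir i)
      = ((fun t : ℝ => a + t • rdir i) ∘ fun t : ℝ => u + t) := by
    funext t
    show a + u • rdir i + t • rdir i = a + (u + t) • rdir i
    module
  rw [hfe, Set.image_comp]

lemma onLine_shift_Ici (a : Pt) (i : Fin 3) (u : ℝ) :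
    onLine (a + u • rdir i) i (Set.Ici 0) = onLine a i (Set.Ici u) := by
  rw [onLine_shift, Set.image_const_add_Ici, add_zero]

lemma onLine_shift_Iic (a : Pt) (i : Fin 3) (u : ℝ) :
    onLine (a + u • rdir i) i (Set.Iic 0) = onLine a i (Set.Iic u) := by
  rw [onLine_shift, Set.image_const_add_Iic, add_zero]

lemma onLine_Ici_eq (a : Pt) (i : Fin 3) (u : ℝ) :
    onLine a i (Set.Ici u) = XiRay i true (a + u • rdir i) := by
  rw [xiRay_true_eq, onLine_shift_Ici]

lemma onLine_Iic_eq (a : Pt) (i : Fin 3) (u : ℝ) :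
    onLine a i (Set.Iic u) = XiRay i false (a + u • rdir i) := by
  rw [xiRay_false_eq, onLine_shift_Iic]

-- line predicates
lemma not_isLineL_subsingleton {S : Set Pt} (h : S.Subsingleton) : ¬ IsLineL S := by
  rintro (⟨a, b, hab, rfl⟩ | ⟨a, d, hd, rfl⟩ | ⟨a, d, hd, rfl⟩)
  · exact hab (h (left_mem_segment ℝ a b) (right_mem_segment ℝ a b))
  · have h1 : a ∈ {x : Pt | ∃ t : ℝ, 0 ≤ t ∧ x = a + t • d} := ⟨0, le_refl 0, by simp⟩
    have h2 : a + d ∈ {x : Pt | ∃ t : ℝ, 0 ≤ t ∧ x = a + t • d} := ⟨1, zero_le_one, by simp⟩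
    exact hd (left_eq_add.mp (h h1 h2))
  · have h1 : a ∈ {x : Pt | ∃ t : ℝ, x = a + t • d} := ⟨0, by simp⟩
    have h2 : a + d ∈ {x : Pt | ∃ t : ℝ, x = a + t • d} := ⟨1, by simp⟩
    exact hd (left_eq_add.mp (h h1 h2))

lemma isLineL_XiRay (i : Fin 3) (s : Bool) (v : Pt) : IsLineL (XiRay i s v) :=
  Or.inr (Or.inl ⟨v, rayDir i s, rayDir_ne_zero i s, rfl⟩)

lemma segment_eq_onLine (a : Pt) (i : Fin 3) {c : ℝ} (hc : 0 < c) :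
    segment ℝ a (a + c • rdir i) = onLine a i (Set.Icc 0 c) := by
  rw [segment_eq_image']
  ext x
  rw [mem_onLine]
  simp only [Set.mem_image, Set.mem_Icc]
  constructor
  · rintro ⟨θ, ⟨h0, h1⟩, rfl⟩
    refine ⟨θ * c, ⟨mul_nonneg h0 hc.le, by nlinarith⟩, by module⟩
  · rintro ⟨t, ⟨h0, h1⟩, rfl⟩
    refine ⟨t / c, ⟨div_nonneg h0 hc.le, (div_le_one hc).mpr h1⟩, ?_⟩
    have hdc : t / c * c = t := div_mul_cancel₀ t hc.ne'
    calc a + (t/c) • (a + c • rdir i - a) = a + (t / c * c) • rdir i := by module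
    _ = a + t • rdir i := by rw [hdc]

lemma isLineL_onLine_Icc (a : Pt) (i : Fin 3) {m M : ℝ} (h : m < M) :
    IsLineL (onLine a i (Set.Icc m M)) := by
  left
  refine ⟨a + m • rdir i, a + M • rdir i, fun hEq => (ne_of_lt h) (onLine_inj a i hEq), ?_⟩
  have h2 : a + M • rdir i = (a + m • rdir i) + (M - m) • rdir i := by module
  rw [h2, segment_eq_onLine _ i (by linarith), onLine_shift, Set.image_const_add_Icc,
    add_zero, add_sub_cancel]

lemma isLineL_onLine_Ici (a : Pt) (i : Fin 3) (u : ℝ) : IsLineL (onLine a i (Set.Ici u)) := by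
  rw [onLine_Ici_eq]; exact isLineL_XiRay _ _ _

lemma isLineL_onLine_Iic (a : Pt) (i : Fin 3) (u : ℝ) : IsLineL (onLine a i (Set.Iic u)) := by
  rw [onLine_Iic_eq]; exact isLineL_XiRay _ _ _

lemma isLineL_onLine_univ (a : Pt) (i : Fin 3) : IsLineL (onLine a i Set.univ) := by
  right; right
  refine ⟨a, rdir i, rdir_ne_zero i, ?_⟩
  ext x
  rw [mem_onLine]
  simp

lemma not_isLineL_onLine_singleton (a : Pt) (i : Fin 3) (u : ℝ) :
    ¬ IsLineL (onLine a i {u}) := by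
  apply not_isLineL_subsingleton
  unfold onLine
  rw [Set.image_singleton]
  exact Set.subsingleton_singleton

lemma pdot_rdir_xiv_ne {i j : Fin 3} (h : i ≠ j) : pdot (rdir i) (xiv j) ≠ 0 := by
  have h3 : (0:ℝ) < Real.sqrt 3 := Real.sqrt_pos.mpr (by norm_num)
  fin_cases i <;> fin_cases j <;> simp_all [rdir, rayDir, xiv, pdot] <;> intro hc <;>
    ring_nf at hc <;> nlinarith [Real.sqrt_pos.mpr (show (0:ℝ) < 3 by norm_num)]

lemma pdot_smul_left (t : ℝ) (x y : Pt) : pdot (t • x) y = t * pdot x y := by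
  simp [pdot]; ring

lemma pdot_neg_left (x y : Pt) : pdot (-x) y = -(pdot x y) := by
  simp [pdot]; ring

lemma pdot_rayDir_xiv_ne {i j : Fin 3} (h : i ≠ j) (s : Bool) :
    pdot (rayDir i s) (xiv j) ≠ 0 := by
  cases s
  · rw [rayDir_false_eq, pdot_neg_left]
    exact neg_ne_zero.mpr (pdot_rdir_xiv_ne h)
  · exact pdot_rdir_xiv_ne h

lemma perp_decomp {i : Fin 3} {x : Pt} (h : pdot x (xiv i) = 0) : ∃ c : ℝ, x = c • rdir i := by
  refine ⟨x.1 * (xiv i).2 - x.2 * (xiv i).1, ?_⟩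
  have hn := xiv_norm i
  have h' : x.1 * (xiv i).1 + x.2 * (xiv i).2 = 0 := h
  have e1 : (x.1 * (xiv i).2 - x.2 * (xiv i).1) * (xiv i).2 = x.1 := by
    linear_combination x.1 * hn - (xiv i).1 * h'
  have e2 : (x.1 * (xiv i).2 - x.2 * (xiv i).1) * (-(xiv i).1) = x.2 := by
    linear_combination x.2 * hn - (xiv i).2 * h'
  rw [Prod.ext_iff]
  exact ⟨by simpa [rdir_eq] using e1.symm, by simpa [rdir_eq] using e2.symm⟩

lemma classify {i : Fin 3} {e : Set Pt} (he : IsLineL e) (hp : PerpTo i e) :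
    (∃ a L, 0 < L ∧ e = onLine a i (Set.Icc 0 L)) ∨ (∃ a, e = onLine a i (Set.Ici 0)) ∨
    (∃ a, e = onLine a i (Set.Iic 0)) ∨ (∃ a, e = onLine a i Set.univ) := by
  rcases he with ⟨a, b, hab, rfl⟩ | ⟨a, d, hd, rfl⟩ | ⟨a, d, hd, rfl⟩
  · have h0 : pdot (b - a) (xiv i) = 0 :=
      hp b (right_mem_segment ℝ a b) a (left_mem_segment ℝ a b)
    obtain ⟨c, hc⟩ := perp_decomp h0
    have hb : b = a + c • rdir i := by rw [← hc]; module
    have hcne : c ≠ 0 := by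
      rintro rfl
      apply hab
      rw [hb]
      simp
    rcases hcne.lt_or_gt with hneg | hpos
    · left
      refine ⟨b, -c, by linarith, ?_⟩
      rw [segment_symm]
      have ha' : a = b + (-c) • rdir i := by rw [hb]; module
      rw [ha']
      exact segment_eq_onLine b i (by linarith)
    · left
      exact ⟨a, c, hpos, by rw [hb]; exact segment_eq_onLine a i hpos⟩
  · have hma : a ∈ {x : Pt | ∃ t : ℝ, 0 ≤ t ∧ x = a + t • d} := ⟨0, le_refl 0, by simp⟩
    have hmad : a + d ∈ {x : Pt | ∃ t : ℝ, 0 ≤ t ∧ x = a + t • d} := ⟨1, zero_le_one, by simp⟩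
    have h0 : pdot d (xiv i) = 0 := by
      have := hp _ hmad _ hma
      rwa [add_sub_cancel_left] at this
    obtain ⟨c, rfl⟩ := perp_decomp h0
    have hcne : c ≠ 0 := fun h => hd (by rw [h, zero_smul])
    rcases hcne.lt_or_gt with hneg | hpos
    · right; right; left
      refine ⟨a, ?_⟩
      ext x
      rw [mem_onLine]
      simp only [Set.mem_setOf_eq, Set.mem_Iic]
      constructor
      · rintro ⟨t, ht, rfl⟩
        exact ⟨t * c, by nlinarith, by rw [smul_smul]⟩
      · rintro ⟨s, hs, rfl⟩
        refine ⟨s / c, by rw [div_nonneg_iff]; right; exact ⟨hs, hneg.le⟩, ?_⟩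
        rw [smul_smul, div_mul_cancel₀ s hcne]
    · right; left
      refine ⟨a, ?_⟩
      ext x
      rw [mem_onLine]
      simp only [Set.mem_setOf_eq, Set.mem_Ici]
      constructor
      · rintro ⟨t, ht, rfl⟩
        exact ⟨t * c, by nlinarith, by rw [smul_smul]⟩
      · rintro ⟨s, hs, rfl⟩
        refine ⟨s / c, div_nonneg hs hpos.le, ?_⟩
        rw [smul_smul, div_mul_cancel₀ s hcne]
  · have hma : a ∈ {x : Pt | ∃ t : ℝ, x = a + t • d} := ⟨0, by simp⟩
    have hmad : a + d ∈ {x : Pt | ∃ t : ℝ, x = a + t • d} := ⟨1, by simp⟩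
    have h0 : pdot d (xiv i) = 0 := by
      have := hp _ hmad _ hma
      rwa [add_sub_cancel_left] at this
    obtain ⟨c, rfl⟩ := perp_decomp h0
    have hcne : c ≠ 0 := fun h => hd (by rw [h, zero_smul])
    right; right; right
    refine ⟨a, ?_⟩
    ext x
    rw [mem_onLine]
    simp only [Set.mem_setOf_eq, Set.mem_univ, true_and]
    constructor
    · rintro ⟨t, rfl⟩
      exact ⟨t * c, by rw [smul_smul]⟩
    · rintro ⟨s, rfl⟩
      exact ⟨s / c, by rw [smul_smul, div_mul_cancel₀ s hcne]⟩

lemma not_interiorPt_min {a : Pt} {i : Fin 3} {I : Set ℝ} {u : ℝ}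
    (hmin : ∀ t ∈ I, u ≤ t) : ¬ InteriorPt (onLine a i I) (a + u • rdir i) := by
  rintro ⟨_, d, hd, ε, hε, hall⟩
  obtain ⟨t₁, ht₁, he₁⟩ := mem_onLine.mp (hall ε (by rw [abs_of_pos hε]))
  obtain ⟨t₂, ht₂, he₂⟩ := mem_onLine.mp (hall (-ε) (by rw [abs_neg, abs_of_pos hε]))
  have k₁ : ε • d = (t₁ - u) • rdir i := by
    calc ε • d = (a + u • rdir i + ε • d) - (a + u • rdir i) := by module
    _ = (a + t₁ • rdir i) - (a + u • rdir i) := by rw [← he₁]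
    _ = (t₁ - u) • rdir i := by module
  have k₂ : (-ε) • d = (t₂ - u) • rdir i := by
    calc (-ε) • d = (a + u • rdir i + (-ε) • d) - (a + u • rdir i) := by module
    _ = (a + t₂ • rdir i) - (a + u • rdir i) := by rw [← he₂]
    _ = (t₂ - u) • rdir i := by module
  have hsum : ((t₁ - u) + (t₂ - u)) • rdir i = 0 := by
    rw [add_smul, ← k₁, ← k₂]; module
  have hzero : (t₁ - u) + (t₂ - u) = 0 := by
    rcases smul_eq_zero.mp hsum with h | h
    · exact h
    · exact absurd h (rdir_ne_zero i)
  have h1 : u ≤ t₁ := hmin _ ht₁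
  have h2 : u ≤ t₂ := hmin _ ht₂
  have ht1u : t₁ = u := by linarith
  apply hd
  have hεd : ε • d = 0 := by rw [k₁, ht1u]; simp
  rcases smul_eq_zero.mp hεd with h | h
  · exact absurd h (ne_of_gt hε)
  · exact h

lemma not_interiorPt_max {a : Pt} {i : Fin 3} {I : Set ℝ} {u : ℝ}
    (hmax : ∀ t ∈ I, t ≤ u) : ¬ InteriorPt (onLine a i I) (a + u • rdir i) := by
  rintro ⟨_, d, hd, ε, hε, hall⟩
  obtain ⟨t₁, ht₁, he₁⟩ := mem_onLine.mp (hall ε (by rw [abs_of_pos hε]))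
  obtain ⟨t₂, ht₂, he₂⟩ := mem_onLine.mp (hall (-ε) (by rw [abs_neg, abs_of_pos hε]))
  have k₁ : ε • d = (t₁ - u) • rdir i := by
    calc ε • d = (a + u • rdir i + ε • d) - (a + u • rdir i) := by module
    _ = (a + t₁ • rdir i) - (a + u • rdir i) := by rw [← he₁]
    _ = (t₁ - u) • rdir i := by module
  have k₂ : (-ε) • d = (t₂ - u) • rdir i := by
    calc (-ε) • d = (a + u • rdir i + (-ε) • d) - (a + u • rdir i) := by module
    _ = (a + t₂ • rdir i) - (a + u • rdir i) := by rw [← he₂]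
    _ = (t₂ - u) • rdir i := by module
  have hsum : ((t₁ - u) + (t₂ - u)) • rdir i = 0 := by
    rw [add_smul, ← k₁, ← k₂]; module
  have hzero : (t₁ - u) + (t₂ - u) = 0 := by
    rcases smul_eq_zero.mp hsum with h | h
    · exact h
    · exact absurd h (rdir_ne_zero i)
  have h1 : t₁ ≤ u := hmax _ ht₁
  have h2 : t₂ ≤ u := hmax _ ht₂
  have ht1u : t₁ = u := by linarith
  apply hd
  have hεd : ε • d = 0 := by rw [k₁, ht1u]; simp
  rcases smul_eq_zero.mp hεd with h | h
  · exact absurd h (ne_of_gt hε)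
  · exact h

lemma mem_onLine_of {a : Pt} {i : Fin 3} {I : Set ℝ} {u : ℝ} (hu : u ∈ I) :
    a + u • rdir i ∈ onLine a i I := mem_onLine.mpr ⟨u, hu, rfl⟩

lemma inter_transversal {i j : Fin 3} (hij : i ≠ j) {e : Set Pt} (hp : PerpTo j e) {v : Pt}
    (hv : v ∈ e) (s : Bool) : e ∩ XiRay i s v = {v} := by
  apply Set.eq_singleton_iff_unique_mem.mpr
  refine ⟨⟨hv, 0, le_refl 0, by simp⟩, ?_⟩
  rintro x ⟨hxe, t, ht, rfl⟩
  have h0 : pdot (t • rayDir i s) (xiv j) = 0 := by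
    have := hp _ hxe _ hv
    rwa [add_sub_cancel_left] at this
  rw [pdot_smul_left] at h0
  rcases mul_eq_zero.mp h0 with h | h
  · rw [h]; simp
  · exact absurd h (pdot_rayDir_xiv_ne hij s)

lemma xiRay_not_perp {i j : Fin 3} (hij : i ≠ j) (s : Bool) (v : Pt) :
    ¬ PerpTo j (XiRay i s v) := by
  intro hp
  have h1 : v ∈ XiRay i s v := ⟨0, le_refl 0, by simp⟩
  have h2 : v + rayDir i s ∈ XiRay i s v := ⟨1, zero_le_one, by simp⟩
  have h3 := hp _ h2 _ h1
  rw [add_sub_cancel_left] at h3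
  exact pdot_rayDir_xiv_ne hij s h3

lemma self_mem_xiRay (i : Fin 3) (s : Bool) (v : Pt) : v ∈ XiRay i s v :=
  ⟨0, le_refl 0, by simp⟩

lemma ne_xiRay_Icc {a : Pt} {i : Fin 3} {L : ℝ} (hL : 0 < L) (s : Bool) :
    ¬ ∃ v : Pt, onLine a i (Set.Icc 0 L) = XiRay i s v := by
  rintro ⟨v, hv⟩
  have hve : v ∈ onLine a i (Set.Icc 0 L) := by rw [hv]; exact self_mem_xiRay i s v
  obtain ⟨u, _, rfl⟩ := mem_onLine.mp hve
  cases s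
  · rw [← onLine_Iic_eq] at hv
    have heq := onLine_inj_sets hv
    have h1 : min 0 u - 1 ∈ Set.Iic u := by
      simp only [Set.mem_Iic]
      have := min_le_right (0:ℝ) u
      linarith
    rw [← heq] at h1
    have := h1.1
    have := min_le_left (0:ℝ) u
    linarith
  · rw [← onLine_Ici_eq] at hv
    have heq := onLine_inj_sets hv
    have h1 : max L u + 1 ∈ Set.Ici u := by
      simp only [Set.mem_Ici]
      have := le_max_right L u
      linarith
    rw [← heq] at h1
    have := h1.2
    have := le_max_left L u
    linarith

lemma ne_xiRay_Ici_false {a : Pt} {i : Fin 3} :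
    ¬ ∃ v : Pt, onLine a i (Set.Ici 0) = XiRay i false v := by
  rintro ⟨v, hv⟩
  have hve : v ∈ onLine a i (Set.Ici 0) := by rw [hv]; exact self_mem_xiRay i false v
  obtain ⟨u, _, rfl⟩ := mem_onLine.mp hve
  rw [← onLine_Iic_eq] at hv
  have heq := onLine_inj_sets hv
  have h1 : min 0 u - 1 ∈ Set.Iic u := by
    simp only [Set.mem_Iic]
    have := min_le_right (0:ℝ) u
    linarith
  rw [← heq] at h1
  have h2 : (0:ℝ) ≤ min 0 u - 1 := h1
  have := min_le_left (0:ℝ) u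
  linarith

lemma ne_xiRay_Iic_true {a : Pt} {i : Fin 3} :
    ¬ ∃ v : Pt, onLine a i (Set.Iic 0) = XiRay i true v := by
  rintro ⟨v, hv⟩
  have hve : v ∈ onLine a i (Set.Iic 0) := by rw [hv]; exact self_mem_xiRay i true v
  obtain ⟨u, _, rfl⟩ := mem_onLine.mp hve
  rw [← onLine_Ici_eq] at hv
  have heq := onLine_inj_sets hv
  have h1 : max 0 u + 1 ∈ Set.Ici u := by
    simp only [Set.mem_Ici]
    have := le_max_right (0:ℝ) u
    linarith
  rw [← heq] at h1
  have h2 : max 0 u + 1 ≤ (0:ℝ) := h1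
  have := le_max_left (0:ℝ) u
  linarith

lemma ne_xiRay_univ {a : Pt} {i : Fin 3} (s : Bool) :
    ¬ ∃ v : Pt, onLine a i Set.univ = XiRay i s v := by
  rintro ⟨v, hv⟩
  have hve : v ∈ onLine a i Set.univ := by rw [hv]; exact self_mem_xiRay i s v
  obtain ⟨u, _, rfl⟩ := mem_onLine.mp hve
  cases s
  · rw [← onLine_Iic_eq] at hv
    have heq := onLine_inj_sets hv
    have h1 : u + 1 ∈ Set.Iic u := by rw [← heq]; trivial
    have := Set.mem_Iic.mp h1
    linarith
  · rw [← onLine_Ici_eq] at hv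
    have heq := onLine_inj_sets hv
    have h1 : u - 1 ∈ Set.Ici u := by rw [← heq]; trivial
    have := Set.mem_Ici.mp h1
    linarith

lemma exists_xiRay_Ici (a : Pt) (i : Fin 3) :
    ∃ v : Pt, onLine a i (Set.Ici 0) = XiRay i true v :=
  ⟨a + (0:ℝ) • rdir i, onLine_Ici_eq a i 0⟩

lemma exists_xiRay_Iic (a : Pt) (i : Fin 3) :
    ∃ v : Pt, onLine a i (Set.Iic 0) = XiRay i false v :=
  ⟨a + (0:ℝ) • rdir i, onLine_Iic_eq a i 0⟩

lemma Icc_inter_Ici' {m M u : ℝ} (h : m ≤ u) : Set.Icc m M ∩ Set.Ici u = Set.Icc u M := by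
  ext t
  simp only [Set.mem_inter_iff, Set.mem_Icc, Set.mem_Ici]
  constructor
  · rintro ⟨⟨_, h2⟩, h3⟩; exact ⟨h3, h2⟩
  · rintro ⟨h1, h2⟩; exact ⟨⟨h.trans h1, h2⟩, h1⟩

lemma Icc_inter_Iic' {m M u : ℝ} (h : u ≤ M) : Set.Icc m M ∩ Set.Iic u = Set.Icc m u := by
  ext t
  simp only [Set.mem_inter_iff, Set.mem_Icc, Set.mem_Iic]
  constructor
  · rintro ⟨⟨h1, _⟩, h3⟩; exact ⟨h1, h3⟩
  · rintro ⟨h1, h2⟩; exact ⟨⟨h1, h2.trans h⟩, h2⟩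

lemma base_mem_eq_iff {a : Pt} {i : Fin 3} {u u' : ℝ} :
    a + u • rdir i = a + u' • rdir i ↔ u = u' :=
  ⟨fun h => onLine_inj a i h, fun h => by rw [h]⟩

lemma chi_Icc (a : Pt) (i : Fin 3) {L : ℝ} (hL : 0 < L) (v : Pt) :
    ((if v ∈ onLine a i (Set.Icc 0 L) ∧
        IsLineL (onLine a i (Set.Icc 0 L) ∩ XiRay i true v) then (1:ℤ) else 0) -
     (if v ∈ onLine a i (Set.Icc 0 L) ∧
        IsLineL (onLine a i (Set.Icc 0 L) ∩ XiRay i false v) then (1:ℤ) else 0)) =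
    ((if v = a + (0:ℝ) • rdir i then (1:ℤ) else 0) -
     (if v = a + L • rdir i then (1:ℤ) else 0)) := by
  by_cases hv : v ∈ onLine a i (Set.Icc 0 L)
  · obtain ⟨u, hu, rfl⟩ := mem_onLine.mp hv
    have hT : onLine a i (Set.Icc 0 L) ∩ XiRay i true (a + u • rdir i)
        = onLine a i (Set.Icc u L) := by
      rw [← onLine_Ici_eq, onLine_inter, Icc_inter_Ici' hu.1]
    have hF : onLine a i (Set.Icc 0 L) ∩ XiRay i false (a + u • rdir i)
        = onLine a i (Set.Icc 0 u) := by
      rw [← onLine_Iic_eq, onLine_inter, Icc_inter_Iic' hu.2]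
    by_cases hu0 : u = 0
    · subst hu0
      rw [if_pos ⟨hv, by rw [hT]; exact isLineL_onLine_Icc a i hL⟩,
        if_neg (fun hc => not_isLineL_onLine_singleton a i 0
          (by have h2 := hc.2; rw [hF, Set.Icc_self] at h2; exact h2)),
        if_pos rfl, if_neg (fun hc => hL.ne' (base_mem_eq_iff.mp hc).symm)]
    · by_cases huL : u = L
      · subst huL
        rw [if_neg (fun hc => not_isLineL_onLine_singleton a i u
            (by have h2 := hc.2; rw [hT, Set.Icc_self] at h2; exact h2)),
          if_pos ⟨hv, by rw [hF]; exact isLineL_onLine_Icc a i (lt_of_le_of_ne hu.1 (Ne.symm hu0))⟩,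
          if_neg (fun hc => hu0 (base_mem_eq_iff.mp hc)), if_pos rfl]
      · have hu0' : 0 < u := lt_of_le_of_ne hu.1 (Ne.symm hu0)
        have huL' : u < L := lt_of_le_of_ne hu.2 huL
        rw [if_pos ⟨hv, by rw [hT]; exact isLineL_onLine_Icc a i huL'⟩,
          if_pos ⟨hv, by rw [hF]; exact isLineL_onLine_Icc a i hu0'⟩,
          if_neg (fun hc => hu0 (base_mem_eq_iff.mp hc)),
          if_neg (fun hc => huL (base_mem_eq_iff.mp hc))]
        norm_num
  · rw [if_neg (fun hc => hv hc.1), if_neg (fun hc => hv hc.1),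
      if_neg (fun hc => hv (by rw [hc]; exact mem_onLine_of ⟨le_refl 0, hL.le⟩)),
      if_neg (fun hc => hv (by rw [hc]; exact mem_onLine_of ⟨hL.le, le_refl L⟩))]

lemma chi_Ici (a : Pt) (i : Fin 3) (v : Pt) :
    ((if v ∈ onLine a i (Set.Ici 0) ∧
        IsLineL (onLine a i (Set.Ici 0) ∩ XiRay i true v) then (1:ℤ) else 0) -
     (if v ∈ onLine a i (Set.Ici 0) ∧
        IsLineL (onLine a i (Set.Ici 0) ∩ XiRay i false v) then (1:ℤ) else 0)) =
    (if v = a + (0:ℝ) • rdir i then (1:ℤ) else 0) := by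
  by_cases hv : v ∈ onLine a i (Set.Ici 0)
  · obtain ⟨u, hu, rfl⟩ := mem_onLine.mp hv
    have hu' : (0:ℝ) ≤ u := hu
    have hT : onLine a i (Set.Ici 0) ∩ XiRay i true (a + u • rdir i)
        = onLine a i (Set.Ici u) := by
      rw [← onLine_Ici_eq, onLine_inter, Set.Ici_inter_Ici, max_eq_right hu']
    have hF : onLine a i (Set.Ici 0) ∩ XiRay i false (a + u • rdir i)
        = onLine a i (Set.Icc 0 u) := by
      rw [← onLine_Iic_eq, onLine_inter, Set.Ici_inter_Iic]
    by_cases hu0 : u = 0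
    · subst hu0
      rw [if_pos ⟨hv, by rw [hT]; exact isLineL_onLine_Ici a i 0⟩,
        if_neg (fun hc => not_isLineL_onLine_singleton a i 0
          (by have h2 := hc.2; rw [hF, Set.Icc_self] at h2; exact h2)),
        if_pos rfl]
      norm_num
    · have hu0' : 0 < u := lt_of_le_of_ne hu' (Ne.symm hu0)
      rw [if_pos ⟨hv, by rw [hT]; exact isLineL_onLine_Ici a i u⟩,
        if_pos ⟨hv, by rw [hF]; exact isLineL_onLine_Icc a i hu0'⟩,
        if_neg (fun hc => hu0 (base_mem_eq_iff.mp hc))]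
      norm_num
  · rw [if_neg (fun hc => hv hc.1), if_neg (fun hc => hv hc.1),
      if_neg (fun hc => hv (by rw [hc]; exact mem_onLine_of (by norm_num)))]
    norm_num

lemma chi_Iic (a : Pt) (i : Fin 3) (v : Pt) :
    ((if v ∈ onLine a i (Set.Iic 0) ∧
        IsLineL (onLine a i (Set.Iic 0) ∩ XiRay i true v) then (1:ℤ) else 0) -
     (if v ∈ onLine a i (Set.Iic 0) ∧
        IsLineL (onLine a i (Set.Iic 0) ∩ XiRay i false v) then (1:ℤ) else 0)) =
    -(if v = a + (0:ℝ) • rdir i then (1:ℤ) else 0) := by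
  by_cases hv : v ∈ onLine a i (Set.Iic 0)
  · obtain ⟨u, hu, rfl⟩ := mem_onLine.mp hv
    have hu' : u ≤ (0:ℝ) := hu
    have hT : onLine a i (Set.Iic 0) ∩ XiRay i true (a + u • rdir i)
        = onLine a i (Set.Icc u 0) := by
      rw [← onLine_Ici_eq, onLine_inter, Set.inter_comm, Set.Ici_inter_Iic]
    have hF : onLine a i (Set.Iic 0) ∩ XiRay i false (a + u • rdir i)
        = onLine a i (Set.Iic u) := by
      rw [← onLine_Iic_eq, onLine_inter, Set.Iic_inter_Iic, min_eq_right hu']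
    by_cases hu0 : u = 0
    · subst hu0
      rw [if_neg (fun hc => not_isLineL_onLine_singleton a i 0
          (by have h2 := hc.2; rw [hT, Set.Icc_self] at h2; exact h2)),
        if_pos ⟨hv, by rw [hF]; exact isLineL_onLine_Iic a i 0⟩,
        if_pos rfl]
      norm_num
    · have hu0' : u < 0 := lt_of_le_of_ne hu' hu0
      rw [if_pos ⟨hv, by rw [hT]; exact isLineL_onLine_Icc a i hu0'⟩,
        if_pos ⟨hv, by rw [hF]; exact isLineL_onLine_Iic a i u⟩,
        if_neg (fun hc => hu0 (base_mem_eq_iff.mp hc))]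
      norm_num
  · rw [if_neg (fun hc => hv hc.1), if_neg (fun hc => hv hc.1),
      if_neg (fun hc => hv (by rw [hc]; exact mem_onLine_of (by norm_num)))]
    norm_num

lemma chi_univ (a : Pt) (i : Fin 3) (v : Pt) :
    ((if v ∈ onLine a i Set.univ ∧
        IsLineL (onLine a i Set.univ ∩ XiRay i true v) then (1:ℤ) else 0) -
     (if v ∈ onLine a i Set.univ ∧
        IsLineL (onLine a i Set.univ ∩ XiRay i false v) then (1:ℤ) else 0)) = 0 := by
  by_cases hv : v ∈ onLine a i Set.univ
  · obtain ⟨u, _, rfl⟩ := mem_onLine.mp hv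
    have hT : onLine a i Set.univ ∩ XiRay i true (a + u • rdir i)
        = onLine a i (Set.Ici u) := by
      rw [← onLine_Ici_eq, onLine_inter, Set.univ_inter]
    have hF : onLine a i Set.univ ∩ XiRay i false (a + u • rdir i)
        = onLine a i (Set.Iic u) := by
      rw [← onLine_Iic_eq, onLine_inter, Set.univ_inter]
    rw [if_pos ⟨hv, by rw [hT]; exact isLineL_onLine_Ici a i u⟩,
      if_pos ⟨hv, by rw [hF]; exact isLineL_onLine_Iic a i u⟩]
    ring
  · rw [if_neg (fun hc => hv hc.1), if_neg (fun hc => hv hc.1)]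
    ring

lemma sum_ind_eq (verts : Finset Pt) (p : Pt) (hp : p ∈ verts) :
    (∑ v ∈ verts, (if v = p then (1:ℤ) else 0)) = 1 := by
  rw [Finset.sum_ite_eq' verts p (fun _ => (1:ℤ))]
  exact if_pos hp

lemma per_edge (verts : Finset Pt) (i : Fin 3) (e : Set Pt)
    (hline : IsLineL e) (hperp : ∃ j, PerpTo j e)
    (hends : ∀ x : Pt, IsEnd x e → x ∈ verts) :
    ((∑ v ∈ verts, (if v ∈ e ∧ IsLineL (e ∩ XiRay i true v) then (1:ℤ) else 0)) -
     (∑ v ∈ verts, (if v ∈ e ∧ IsLineL (e ∩ XiRay i false v) then (1:ℤ) else 0))) =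
    ((if ∃ v : Pt, e = XiRay i true v then (1:ℤ) else 0) -
     (if ∃ v : Pt, e = XiRay i false v then (1:ℤ) else 0)) := by
  rw [← Finset.sum_sub_distrib]
  by_cases hpi : PerpTo i e
  · rcases classify hline hpi with ⟨a, L, hL, rfl⟩ | ⟨a, rfl⟩ | ⟨a, rfl⟩ | ⟨a, rfl⟩
    · have hp : a + (0:ℝ) • rdir i ∈ verts :=
        hends _ ⟨mem_onLine_of ⟨le_refl 0, hL.le⟩, not_interiorPt_min (fun t ht => ht.1)⟩
      have hq : a + L • rdir i ∈ verts :=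
        hends _ ⟨mem_onLine_of ⟨hL.le, le_refl L⟩, not_interiorPt_max (fun t ht => ht.2)⟩
      rw [Finset.sum_congr rfl (fun v _ => chi_Icc a i hL v), Finset.sum_sub_distrib,
        sum_ind_eq verts _ hp, sum_ind_eq verts _ hq,
        if_neg (ne_xiRay_Icc hL true), if_neg (ne_xiRay_Icc hL false)]
      norm_num
    · have hp : a + (0:ℝ) • rdir i ∈ verts :=
        hends _ ⟨mem_onLine_of (by norm_num), not_interiorPt_min (fun t ht => ht)⟩
      rw [Finset.sum_congr rfl (fun v _ => chi_Ici a i v), sum_ind_eq verts _ hp,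
        if_pos (exists_xiRay_Ici a i), if_neg ne_xiRay_Ici_false]
      norm_num
    · have hp : a + (0:ℝ) • rdir i ∈ verts :=
        hends _ ⟨mem_onLine_of (by norm_num), not_interiorPt_max (fun t ht => ht)⟩
      rw [Finset.sum_congr rfl (fun v _ => chi_Iic a i v)]
      rw [show (∑ v ∈ verts, -(if v = a + (0:ℝ) • rdir i then (1:ℤ) else 0))
          = -(∑ v ∈ verts, (if v = a + (0:ℝ) • rdir i then (1:ℤ) else 0)) from
        Finset.sum_neg_distrib _]
      rw [sum_ind_eq verts _ hp, if_neg ne_xiRay_Iic_true, if_pos (exists_xiRay_Iic a i)]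
      norm_num
    · rw [Finset.sum_congr rfl (fun v _ => chi_univ a i v), Finset.sum_const_zero,
        if_neg (ne_xiRay_univ true), if_neg (ne_xiRay_univ false)]
      norm_num
  · obtain ⟨j, hpj⟩ := hperp
    have hij : i ≠ j := fun h => hpi (h ▸ hpj)
    have hz : ∀ v ∈ verts, ((if v ∈ e ∧ IsLineL (e ∩ XiRay i true v) then (1:ℤ) else 0) -
        (if v ∈ e ∧ IsLineL (e ∩ XiRay i false v) then (1:ℤ) else 0)) = 0 := by
      intro v _
      have hnot : ∀ s : Bool, ¬ (v ∈ e ∧ IsLineL (e ∩ XiRay i s v)) := by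
        rintro s ⟨hv, hl⟩
        rw [inter_transversal hij hpj hv s] at hl
        exact not_isLineL_subsingleton Set.subsingleton_singleton hl
      rw [if_neg (hnot true), if_neg (hnot false)]
      norm_num
    rw [Finset.sum_congr rfl hz, Finset.sum_const, smul_zero]
    have hnT : ¬ ∃ v : Pt, e = XiRay i true v := by
      rintro ⟨v, rfl⟩
      exact xiRay_not_perp hij true v hpj
    have hnF : ¬ ∃ v : Pt, e = XiRay i false v := by
      rintro ⟨v, rfl⟩
      exact xiRay_not_perp hij false v hpj
    rw [if_neg hnT, if_neg hnF]
    norm_num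

lemma total_eq (H : Honeycomb) (i : Fin 3) :
    (∑ v ∈ H.verts, (wis H.edges H.w i true v - wis H.edges H.w i false v)) =
    (∑ e ∈ H.bdry i true, H.w e) - (∑ e ∈ H.bdry i false, H.w e) := by
  have key : ∀ s : Bool, (∑ v ∈ H.verts, wis H.edges H.w i s v)
      = ∑ e ∈ H.edges, H.w e * (∑ v ∈ H.verts,
          if v ∈ e ∧ IsLineL (e ∩ XiRay i s v) then (1:ℤ) else 0) := by
    intro s
    calc (∑ v ∈ H.verts, wis H.edges H.w i s v)
        = ∑ v ∈ H.verts, ∑ e ∈ H.edges,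
            (if v ∈ e ∧ IsLineL (e ∩ XiRay i s v) then H.w e else 0) := by
          refine Finset.sum_congr rfl fun v _ => ?_
          exact Finset.sum_filter _ _
      _ = ∑ e ∈ H.edges, ∑ v ∈ H.verts,
            (if v ∈ e ∧ IsLineL (e ∩ XiRay i s v) then H.w e else 0) := Finset.sum_comm
      _ = ∑ e ∈ H.edges, H.w e * (∑ v ∈ H.verts,
            if v ∈ e ∧ IsLineL (e ∩ XiRay i s v) then (1:ℤ) else 0) := by
          refine Finset.sum_congr rfl fun e _ => ?_
          rw [Finset.mul_sum]
          refine Finset.sum_congr rfl fun v _ => ?_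
          by_cases h : v ∈ e ∧ IsLineL (e ∩ XiRay i s v) <;> simp [h]
  have hbdry : ∀ s : Bool, (∑ e ∈ H.bdry i s, H.w e)
      = ∑ e ∈ H.edges, (if ∃ v : Pt, e = XiRay i s v then H.w e else 0) := by
    intro s
    exact Finset.sum_filter _ _
  rw [Finset.sum_sub_distrib, key true, key false, ← Finset.sum_sub_distrib,
    hbdry true, hbdry false, ← Finset.sum_sub_distrib]
  refine Finset.sum_congr rfl fun e he => ?_
  have hsys := H.pre.1 e he
  have hpe := per_edge H.verts i e hsys.1 hsys.2 (H.ends_mem e he)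
  calc H.w e * (∑ v ∈ H.verts, if v ∈ e ∧ IsLineL (e ∩ XiRay i true v) then (1:ℤ) else 0)
        - H.w e * (∑ v ∈ H.verts, if v ∈ e ∧ IsLineL (e ∩ XiRay i false v) then (1:ℤ) else 0)
      = H.w e * ((∑ v ∈ H.verts, if v ∈ e ∧ IsLineL (e ∩ XiRay i true v) then (1:ℤ) else 0)
        - (∑ v ∈ H.verts, if v ∈ e ∧ IsLineL (e ∩ XiRay i false v) then (1:ℤ) else 0)) := by
        ring
    _ = H.w e * ((if ∃ v : Pt, e = XiRay i true v then (1:ℤ) else 0)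
        - (if ∃ v : Pt, e = XiRay i false v then (1:ℤ) else 0)) := by rw [hpe]
    _ = (if ∃ v : Pt, e = XiRay i true v then H.w e else 0)
        - (if ∃ v : Pt, e = XiRay i false v then H.w e else 0) := by
        by_cases h1 : ∃ v : Pt, e = XiRay i true v <;>
          by_cases h2 : ∃ v : Pt, e = XiRay i false v <;> simp [h1, h2]


/-- The quantity w(B_i⁺) − w(B_i⁻) is the same for i = 1,2,3. -/
theorem stmt10 (H : Honeycomb) (i j : Fin 3) :
    (∑ e ∈ H.bdry i true, H.w e) - (∑ e ∈ H.bdry i false, H.w e) =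
      (∑ e ∈ H.bdry j true, H.w e) - (∑ e ∈ H.bdry j false, H.w e) := by
  rw [← total_eq H i, ← total_eq H j]
  exact Finset.sum_congr rfl fun v _ => H.pre.2.2 v i j
end
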